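/- For every nonnegative integer n, ∑_{k=0}^{n} H_k³ = (n+1)·H_n³ − (3/2)(2n+1)·H_n² + 3(2n+1)·H_n + (1/2)·H_n^{(2)} − 6n. -/

import Mathlib

def harmonic' (n : ℕ) : ℚ := ∑ j ∈ Finset.Icc 1 n, (1 / j : ℚ)

def harmonic2 (n : ℕ) : ℚ := ∑ j ∈ Finset.Icc 1 n, (1 / (j : ℚ) ^ 2)

lemma harmonic'_succ (n : ℕ) : harmonic' (n + 1) = harmonic' n + 1 / (n + 1 : ℚ) := by
  unfold harmonic'
  rw [Finset.sum_Icc_succ_top (by omega)]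
  push_cast; ring

lemma harmonic2_succ (n : ℕ) : harmonic2 (n + 1) = harmonic2 n + 1 / ((n : ℚ) + 1) ^ 2 := by
  unfold harmonic2
  rw [Finset.sum_Icc_succ_top (by omega)]
  push_cast; ring

theorem stmt_8 (n : ℕ) :
    ∑ k ∈ Finset.range (n + 1), harmonic' k ^ 3
      = (n + 1) * harmonic' n ^ 3 - (3 / 2) * (2 * n + 1) * harmonic' n ^ 2
        + 3 * (2 * n + 1) * harmonic' n + (1 / 2) * harmonic2 n - 6 * n := by
  induction n with
  | zero => simp [harmonic', harmonic2]
  | succ n ih =>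
    rw [Finset.sum_range_succ, ih, harmonic'_succ, harmonic2_succ]
    have h : ((n : ℚ) + 1) ≠ 0 := by positivity
    push_cast
    field_simp
    ring
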